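/- The function h(x) = coth(w₁ - x) + coth(w₂ - x) + coth(w₃ - x), for constants w₁, w₂, w₃, satisfies the third-order non-linear ODE h''' - 4 h h'' - (10 - 6 h² + 3 h') h' - (h² - 1)(h² - 9) = 0 at every point where sinh(w_l - x) ≠ 0 for l = 1,2,3. -/

import Mathlib

open Real

/-- coth as a quotient. -/
noncomputable def cothF (w : ℝ) : ℝ → ℝ := fun t => Real.cosh (w - t) / Real.sinh (w - t)

lemma cothF_hasDerivAt (w x : ℝ) (h : Real.sinh (w - x) ≠ 0) :
    HasDerivAt (cothF w) ((cothF w x) ^ 2 - 1) x := by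
  have hc : HasDerivAt (fun t : ℝ => Real.cosh (w - t)) (-Real.sinh (w - x)) x := by
    have h1 : HasDerivAt (fun t : ℝ => w - t) (-1) x := by
      exact (hasDerivAt_id' x).const_sub w
    exact ((Real.hasDerivAt_cosh (w - x)).comp x h1).congr_deriv (by ring)
  have hs : HasDerivAt (fun t : ℝ => Real.sinh (w - t)) (-Real.cosh (w - x)) x := by
    have h1 : HasDerivAt (fun t : ℝ => w - t) (-1) x := by
      exact (hasDerivAt_id' x).const_sub w
    exact ((Real.hasDerivAt_sinh (w - x)).comp x h1).congr_deriv (by ring)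
  have := hc.div hs h
  refine this.congr_deriv ?_
  have hid : Real.cosh (w - x) ^ 2 - Real.sinh (w - x) ^ 2 = 1 := Real.cosh_sq_sub_sinh_sq _
  unfold cothF
  field_simp
  nlinarith [hid]

/-- The open set where all three sinh's are nonzero. -/
lemma cothF_deriv_sq (w x : ℝ) (h : Real.sinh (w - x) ≠ 0) :
    HasDerivAt (fun t => (cothF w t) ^ 2 - 1)
      (2 * cothF w x * ((cothF w x) ^ 2 - 1)) x := by
  have := ((cothF_hasDerivAt w x h).pow 2).sub_const 1
  refine this.congr_deriv ?_
  ring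

lemma cothF_deriv_cube (w x : ℝ) (h : Real.sinh (w - x) ≠ 0) :
    HasDerivAt (fun t => 2 * cothF w t * ((cothF w t) ^ 2 - 1))
      (2 * (3 * (cothF w x) ^ 2 - 1) * ((cothF w x) ^ 2 - 1)) x := by
  have hd := cothF_hasDerivAt w x h
  have := (((hd.const_mul 2)).mul ((hd.pow 2).sub_const 1))
  refine this.congr_deriv ?_
  simp only [Pi.pow_apply]
  ring

theorem stmt9 (w₁ w₂ w₃ : ℝ) :
    ∀ x : ℝ, Real.sinh (w₁ - x) ≠ 0 → Real.sinh (w₂ - x) ≠ 0 →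
      Real.sinh (w₃ - x) ≠ 0 →
      (let h : ℝ → ℝ := fun t =>
        Real.cosh (w₁ - t) / Real.sinh (w₁ - t) +
        Real.cosh (w₂ - t) / Real.sinh (w₂ - t) +
        Real.cosh (w₃ - t) / Real.sinh (w₃ - t)
      deriv (deriv (deriv h)) x - 4 * h x * deriv (deriv h) x -
        (10 - 6 * (h x) ^ 2 + 3 * deriv h x) * deriv h x -
        ((h x) ^ 2 - 1) * ((h x) ^ 2 - 9) = 0) := by
  intro x hx1 hx2 hx3
  intro h
  -- the open set U
  set U : Set ℝ := {t | Real.sinh (w₁ - t) ≠ 0 ∧ Real.sinh (w₂ - t) ≠ 0 ∧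
    Real.sinh (w₃ - t) ≠ 0} with hU
  have hUopen : IsOpen U := by
    have c1 : Continuous fun t : ℝ => Real.sinh (w₁ - t) :=
      Real.continuous_sinh.comp (continuous_const.sub continuous_id)
    have c2 : Continuous fun t : ℝ => Real.sinh (w₂ - t) :=
      Real.continuous_sinh.comp (continuous_const.sub continuous_id)
    have c3 : Continuous fun t : ℝ => Real.sinh (w₃ - t) :=
      Real.continuous_sinh.comp (continuous_const.sub continuous_id)
    exact ((isOpen_compl_singleton.preimage c1).inter
      ((isOpen_compl_singleton.preimage c2).inter
        (isOpen_compl_singleton.preimage c3)))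
  have hxU : x ∈ U := ⟨hx1, hx2, hx3⟩
  -- h as sum of cothF's
  have hh : h = fun t => cothF w₁ t + cothF w₂ t + cothF w₃ t := rfl
  set g1 : ℝ → ℝ := fun t => ((cothF w₁ t) ^ 2 - 1) + ((cothF w₂ t) ^ 2 - 1) +
    ((cothF w₃ t) ^ 2 - 1) with hg1
  set g2 : ℝ → ℝ := fun t => (2 * cothF w₁ t * ((cothF w₁ t) ^ 2 - 1)) +
    (2 * cothF w₂ t * ((cothF w₂ t) ^ 2 - 1)) +
    (2 * cothF w₃ t * ((cothF w₃ t) ^ 2 - 1)) with hg2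
  -- derivative facts on U
  have D1 : ∀ y ∈ U, HasDerivAt h (g1 y) y := by
    rintro y ⟨h1, h2, h3⟩
    exact ((cothF_hasDerivAt w₁ y h1).add (cothF_hasDerivAt w₂ y h2)).add
      (cothF_hasDerivAt w₃ y h3)
  have D2 : ∀ y ∈ U, HasDerivAt g1 (g2 y) y := by
    rintro y ⟨h1, h2, h3⟩
    exact ((cothF_deriv_sq w₁ y h1).add (cothF_deriv_sq w₂ y h2)).add
      (cothF_deriv_sq w₃ y h3)
  have D3 : ∀ y ∈ U, HasDerivAt g2
      ((2 * (3 * (cothF w₁ y) ^ 2 - 1) * ((cothF w₁ y) ^ 2 - 1)) +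
       (2 * (3 * (cothF w₂ y) ^ 2 - 1) * ((cothF w₂ y) ^ 2 - 1)) +
       (2 * (3 * (cothF w₃ y) ^ 2 - 1) * ((cothF w₃ y) ^ 2 - 1))) y := by
    rintro y ⟨h1, h2, h3⟩
    exact ((cothF_deriv_cube w₁ y h1).add (cothF_deriv_cube w₂ y h2)).add
      (cothF_deriv_cube w₃ y h3)
  -- deriv h = g1 on U
  have E1 : ∀ y ∈ U, deriv h y = g1 y := fun y hy => (D1 y hy).deriv
  have E2 : ∀ y ∈ U, deriv (deriv h) y = g2 y := by
    intro y hy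
    have hev : deriv h =ᶠ[nhds y] g1 :=
      Filter.eventuallyEq_of_mem (hUopen.mem_nhds hy) E1
    rw [Filter.EventuallyEq.deriv_eq hev]
    exact (D2 y hy).deriv
  have E3 : deriv (deriv (deriv h)) x =
      (2 * (3 * (cothF w₁ x) ^ 2 - 1) * ((cothF w₁ x) ^ 2 - 1)) +
      (2 * (3 * (cothF w₂ x) ^ 2 - 1) * ((cothF w₂ x) ^ 2 - 1)) +
      (2 * (3 * (cothF w₃ x) ^ 2 - 1) * ((cothF w₃ x) ^ 2 - 1)) := by
    have hev : deriv (deriv h) =ᶠ[nhds x] g2 :=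
      Filter.eventuallyEq_of_mem (hUopen.mem_nhds hxU) E2
    rw [Filter.EventuallyEq.deriv_eq hev]
    exact (D3 x hxU).deriv
  rw [E3, E2 x hxU, E1 x hxU, hh, hg1, hg2]
  ring
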